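/- Let ν ≥ 1 and L ≥ 2 be natural numbers. Then, as the real variable x tends to +∞, the function x ↦ ( (x·(1 − 1/L))^(x·(1 − 1/L)) · (x − ν)^(x − ν) ) / ( (x·(1 − 1/L) − ν + 1)^(x·(1 − 1/L) − ν + 1) · (x − 1)^(x − 1) ), where all powers are real powers, tends to (1 − 1/L)^(ν − 1). -/

import Mathlib

open Real Filter Topology

/-- The power Stirling factor `ξ(N, ν, L)` in the proof of Theorem 1 of the paper
tends to `(1 − 1/L)^(ν−1)` as `N → ∞` (with `N` replaced by a real variable `x`,
and all variable exponents taken as real powers). -/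
theorem pima_stirling_power_factor_limit (ν L : ℕ) (hν : 1 ≤ ν) (hL : 2 ≤ L) :
    Filter.Tendsto
      (fun x : ℝ =>
        ((x * (1 - 1 / (L : ℝ))) ^ (x * (1 - 1 / (L : ℝ))) * (x - ν) ^ (x - (ν : ℝ))) /
          ((x * (1 - 1 / (L : ℝ)) - ν + 1) ^ (x * (1 - 1 / (L : ℝ)) - (ν : ℝ) + 1) *
            (x - 1) ^ (x - 1)))
      Filter.atTop (nhds ((1 - 1 / (L : ℝ)) ^ (ν - 1))) := by
  have hL2 : (2:ℝ) ≤ (L:ℝ) := by exact_mod_cast hL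
  set a : ℝ := 1 - 1 / (L : ℝ) with ha_def
  have ha : 0 < a := by
    have h1 : 1 / (L:ℝ) ≤ 1 / 2 := one_div_le_one_div_of_le (by norm_num) hL2
    simp only [ha_def]; linarith
  set c : ℝ := (ν : ℝ) - 1 with hc_def
  have hν1 : (1:ℝ) ≤ (ν:ℝ) := by exact_mod_cast hν
  have hc : 0 ≤ c := by simp only [hc_def]; linarith
  -- the basic exponential limit
  have hG : Tendsto (fun y : ℝ => (1 + c / (y - c)) ^ (y - c)) atTop (𝓝 (Real.exp c)) := by
    have := (tendsto_one_add_div_rpow_exp c).comp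
      (tendsto_atTop_add_const_right atTop (-c) tendsto_id)
    simpa [Function.comp_def, sub_eq_add_neg] using this
  have hxa : Tendsto (fun x : ℝ => x * a) atTop atTop :=
    Tendsto.atTop_mul_const ha tendsto_id
  have hx1 : Tendsto (fun x : ℝ => x - 1) atTop atTop := by
    simpa [sub_eq_add_neg] using tendsto_atTop_add_const_right atTop (-1 : ℝ) tendsto_id
  have h1 : Tendsto (fun x : ℝ => (1 + c / (x * a - c)) ^ (x * a - c)) atTop
      (𝓝 (Real.exp c)) := hG.comp hxa
  have h2 : Tendsto (fun x : ℝ => (1 + c / (x - 1 - c)) ^ (x - 1 - c)) atTop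
      (𝓝 (Real.exp c)) := hG.comp hx1
  have h1x : Tendsto (fun x : ℝ => 1 - 1 / x) atTop (𝓝 1) := by
    have h0 : Tendsto (fun x : ℝ => 1 / x) atTop (𝓝 0) := by
      simpa [one_div] using (tendsto_inv_atTop_zero : Tendsto (fun x : ℝ => x⁻¹) atTop (𝓝 0))
    simpa using tendsto_const_nhds.sub h0
  have hq0 : Tendsto (fun x : ℝ => x * a / (x - 1)) atTop (𝓝 a) := by
    have hd : Tendsto (fun x : ℝ => a / (1 - 1 / x)) atTop (𝓝 (a / 1)) :=
      tendsto_const_nhds.div h1x one_ne_zero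
    rw [div_one] at hd
    apply hd.congr'
    filter_upwards [eventually_gt_atTop (1 : ℝ)] with x hx
    have hx0 : x ≠ 0 := by linarith
    have hx1' : x - 1 ≠ 0 := by intro h; apply absurd hx; linarith [sub_eq_zero.mp h]
    field_simp
  have h3 : Tendsto (fun x : ℝ => (x * a / (x - 1)) ^ c) atTop (𝓝 (a ^ c)) :=
    hq0.rpow_const (Or.inr hc)
  have hcomb := (h1.div h2 (Real.exp_ne_zero c)).mul h3
  rw [div_self (Real.exp_ne_zero c), one_mul] at hcomb
  have hval : a ^ c = a ^ (ν - 1) := by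
    rw [← Real.rpow_natCast a (ν - 1)]
    congr 1
    rw [hc_def, Nat.cast_sub hν, Nat.cast_one]
  rw [hval] at hcomb
  apply hcomb.congr'
  filter_upwards [eventually_gt_atTop (((ν : ℝ) + 1) / a + (ν : ℝ) + 1)] with x hx
  have hda : 0 < ((ν : ℝ) + 1) / a := by positivity
  have hxgt : (ν : ℝ) + 1 < x := by linarith
  have hpa : ((ν : ℝ) + 1) / a < x := by linarith
  have hpa' : (ν : ℝ) + 1 < x * a := by
    have := (div_lt_iff₀ ha).mp hpa
    linarith
  have hp : 0 < x * a := by linarith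
  have hpc : 0 < x * a - c := by simp only [hc_def]; linarith
  have hq : 0 < x - 1 := by linarith
  have hqc : 0 < x - 1 - c := by simp only [hc_def]; linarith
  have hbc : x * a - (ν : ℝ) + 1 = x * a - c := by rw [hc_def]; ring
  have hbq : x - (ν : ℝ) = x - 1 - c := by rw [hc_def]; ring
  have e1 : 1 + c / (x * a - c) = x * a / (x * a - c) := by field_simp; ring
  have e2 : 1 + c / (x - 1 - c) = (x - 1) / (x - 1 - c) := by field_simp; ring
  have n1 : ((x * a) ^ (x * a) : ℝ) ≠ 0 := (Real.rpow_pos_of_pos hp _).ne'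
  have n2 : ((x * a) ^ c : ℝ) ≠ 0 := (Real.rpow_pos_of_pos hp _).ne'
  have n3 : ((x * a - c) ^ (x * a - c) : ℝ) ≠ 0 := (Real.rpow_pos_of_pos hpc _).ne'
  have n4 : ((x - 1) ^ (x - 1) : ℝ) ≠ 0 := (Real.rpow_pos_of_pos hq _).ne'
  have n5 : ((x - 1) ^ c : ℝ) ≠ 0 := (Real.rpow_pos_of_pos hq _).ne'
  have n6 : ((x - 1 - c) ^ (x - 1 - c) : ℝ) ≠ 0 := (Real.rpow_pos_of_pos hqc _).ne'
  simp only [Pi.div_apply]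
  rw [e1, e2, Real.div_rpow hp.le hpc.le, Real.div_rpow hq.le hqc.le,
    Real.div_rpow hp.le hq.le, Real.rpow_sub hp, Real.rpow_sub hq, hbc, hbq]
  field_simp
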